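/- For any polynomial p and any polynomial comonoid (c, ε, δ), there is a bijection between: (1) effects handlers with source comonoid the cofree comonoid c⁀p, i.e. polynomial morphisms c⁀p ◁ s ← s ◁ c commuting with counits and comultiplications, and (2) elementary (p,c)-effects handlers, i.e. arbitrary polynomial morphisms p ◁ s ← s ◁ c. One direction composes with the projection c⁀p → p; the inverse is constructed by induction using the limit presentation c⁀p ◁ s ≅ lim_i (p⁽ⁱ⁾ ◁ s). -/

import Mathlib

/-- A polynomial functor, given by a set of positions and, for each position, a set of
directions. -/
structure PolyF where
  pos : Type
  dir : pos → Type

/-- A morphism of polynomial functors (natural transformation), in positions/directions form. -/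
structure PolyFHom (p q : PolyF) where
  onPos : p.pos → q.pos
  onDir : ∀ a, q.dir (onPos a) → p.dir a

def PolyFHom.id (p : PolyF) : PolyFHom p p := ⟨fun a => a, fun _ d => d⟩

/-- Diagrammatic composition of morphisms of polynomials. -/
def PolyFHom.comp {p q r : PolyF} (f : PolyFHom p q) (g : PolyFHom q r) : PolyFHom p r :=
  ⟨fun a => g.onPos (f.onPos a), fun a d => f.onDir a (g.onDir (f.onPos a) d)⟩

/-- The identity polynomial `y`. -/
def yPoly : PolyF := ⟨PUnit, fun _ => PUnit⟩

/-- The linear polynomial `S·y`. -/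
def lin (S : Type) : PolyF := ⟨S, fun _ => PUnit⟩

/-- The representable polynomial `y^T`. -/
def rep (T : Type) : PolyF := ⟨PUnit, fun _ => T⟩

/-- The composition product `p ◁ q` of polynomials. -/
def polyComp (p q : PolyF) : PolyF :=
  ⟨Σ a : p.pos, p.dir a → q.pos, fun x => Σ i : p.dir x.1, q.dir (x.2 i)⟩

/-- The Dirichlet tensor product `p ⊗ q`. -/
def tens (p q : PolyF) : PolyF :=
  ⟨p.pos × q.pos, fun x => p.dir x.1 × q.dir x.2⟩

/-- Horizontal composition `f ◁ g` of polynomial morphisms. -/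
def hcomp {p p' q q' : PolyF} (f : PolyFHom p p') (g : PolyFHom q q') :
    PolyFHom (polyComp p q) (polyComp p' q') :=
  ⟨fun x => ⟨f.onPos x.1, fun i => g.onPos (x.2 (f.onDir x.1 i))⟩,
   fun x d => ⟨f.onDir x.1 d.1, g.onDir _ d.2⟩⟩

/-- The associator `(p ◁ q) ◁ r → p ◁ (q ◁ r)`. -/
def assocHom (p q r : PolyF) : PolyFHom (polyComp (polyComp p q) r) (polyComp p (polyComp q r)) :=
  ⟨fun x => ⟨x.1.1, fun i => ⟨x.1.2 i, fun j => x.2 ⟨i, j⟩⟩⟩,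
   fun x d => ⟨⟨d.1, d.2.1⟩, d.2.2⟩⟩

/-- The inverse associator `p ◁ (q ◁ r) → (p ◁ q) ◁ r`. -/
def assocInv (p q r : PolyF) : PolyFHom (polyComp p (polyComp q r)) (polyComp (polyComp p q) r) :=
  ⟨fun x => ⟨⟨x.1, fun i => (x.2 i).1⟩, fun ij => (x.2 ij.1).2 ij.2⟩,
   fun x d => ⟨d.1.1, d.1.2, d.2⟩⟩

/-- Left unitor `y ◁ p → p`. -/
def lunitor (p : PolyF) : PolyFHom (polyComp yPoly p) p :=
  ⟨fun x => x.2 PUnit.unit, fun _ d => ⟨PUnit.unit, d⟩⟩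

/-- Right unitor `p ◁ y → p`. -/
def runitor (p : PolyF) : PolyFHom (polyComp p yPoly) p :=
  ⟨fun x => x.1, fun _ d => ⟨d, PUnit.unit⟩⟩

/-- Inverse left unitor `p → y ◁ p`. -/
def lunitorInv (p : PolyF) : PolyFHom p (polyComp yPoly p) :=
  ⟨fun a => ⟨PUnit.unit, fun _ => a⟩, fun _ d => d.2⟩

/-- Inverse right unitor `p → p ◁ y`. -/
def runitorInv (p : PolyF) : PolyFHom p (polyComp p yPoly) :=
  ⟨fun a => ⟨a, fun _ => PUnit.unit⟩, fun _ d => d.1⟩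

/-- A comonoid structure on a polynomial with respect to `(y, ◁)`. -/
structure ComonoidStruct (c : PolyF) where
  counit : PolyFHom c yPoly
  comul : PolyFHom c (polyComp c c)
  counit_left : comul.comp ((hcomp counit (PolyFHom.id c)).comp (lunitor c)) = PolyFHom.id c
  counit_right : comul.comp ((hcomp (PolyFHom.id c) counit).comp (runitor c)) = PolyFHom.id c
  coassoc : comul.comp (hcomp (PolyFHom.id c) comul)
    = comul.comp ((hcomp comul (PolyFHom.id c)).comp (assocHom c c c))

/-- `f` is a comonoid homomorphism. -/
def IsComonHom {c d : PolyF} (mc : ComonoidStruct c) (md : ComonoidStruct d)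
    (f : PolyFHom c d) : Prop :=
  f.comp md.counit = mc.counit ∧ f.comp md.comul = mc.comul.comp (hcomp f f)

/-- A `(c,d)`-bicomodule. -/
structure Bicomod (c d : PolyF) (mc : ComonoidStruct c) (md : ComonoidStruct d) where
  carrier : PolyF
  coactL : PolyFHom carrier (polyComp c carrier)
  coactR : PolyFHom carrier (polyComp carrier d)
  counitL : coactL.comp ((hcomp mc.counit (PolyFHom.id carrier)).comp (lunitor carrier))
    = PolyFHom.id carrier
  coassocL : coactL.comp (hcomp (PolyFHom.id c) coactL)
    = coactL.comp ((hcomp mc.comul (PolyFHom.id carrier)).comp (assocHom c c carrier))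
  counitR : coactR.comp ((hcomp (PolyFHom.id carrier) md.counit).comp (runitor carrier))
    = PolyFHom.id carrier
  coassocR : coactR.comp (hcomp (PolyFHom.id carrier) md.comul)
    = coactR.comp ((hcomp coactR (PolyFHom.id d)).comp (assocHom carrier d d))
  compat : coactL.comp (hcomp (PolyFHom.id c) coactR)
    = coactR.comp ((hcomp coactL (PolyFHom.id d)).comp (assocHom c carrier d))

/-- A morphism of `(c,d)`-bicomodules. -/
structure BicomodHom {c d : PolyF} {mc : ComonoidStruct c} {md : ComonoidStruct d}
    (P Q : Bicomod c d mc md) where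
  val : PolyFHom P.carrier Q.carrier
  commL : P.coactL.comp (hcomp (PolyFHom.id c) val) = val.comp Q.coactL
  commR : P.coactR.comp (hcomp val (PolyFHom.id d)) = val.comp Q.coactR

/-- A witness that the bicomodule `B` is the composite `P ◁_d Q`, i.e. the equalizer of the
two canonical maps `P ◁ Q ⇉ P ◁ d ◁ Q`, compatibly with the coactions. -/
structure CompositeWitness {c d e : PolyF} {mc : ComonoidStruct c} {md : ComonoidStruct d}
    {me : ComonoidStruct e} (P : Bicomod c d mc md) (Q : Bicomod d e md me)
    (B : Bicomod c e mc me) where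
  incl : PolyFHom B.carrier (polyComp P.carrier Q.carrier)
  equalizes : incl.comp ((hcomp P.coactR (PolyFHom.id Q.carrier)).comp
      (assocHom P.carrier d Q.carrier))
    = incl.comp (hcomp (PolyFHom.id P.carrier) Q.coactL)
  lift : ∀ (X : PolyF) (h : PolyFHom X (polyComp P.carrier Q.carrier)),
    h.comp ((hcomp P.coactR (PolyFHom.id Q.carrier)).comp (assocHom P.carrier d Q.carrier))
      = h.comp (hcomp (PolyFHom.id P.carrier) Q.coactL) →
    ∃! l : PolyFHom X B.carrier, l.comp incl = h
  compatL : B.coactL.comp (hcomp (PolyFHom.id c) incl)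
    = incl.comp ((hcomp P.coactL (PolyFHom.id Q.carrier)).comp (assocHom c P.carrier Q.carrier))
  compatR : B.coactR.comp (hcomp incl (PolyFHom.id e))
    = incl.comp ((hcomp (PolyFHom.id P.carrier) Q.coactR).comp (assocInv P.carrier Q.carrier e))

/-- The identity bicomodule on a comonoid. -/
def idBicomod {c : PolyF} (mc : ComonoidStruct c) : Bicomod c c mc mc where
  carrier := c
  coactL := mc.comul
  coactR := mc.comul
  counitL := mc.counit_left
  coassocL := mc.coassoc
  counitR := mc.counit_right
  coassocR := mc.coassoc
  compat := mc.coassoc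

/-- A monad on `c` in the bicategory of polynomial comonoids and bicomodules. -/
structure MonadOn {c : PolyF} {mc : ComonoidStruct c} (m : Bicomod c c mc mc) where
  sq : Bicomod c c mc mc
  w : CompositeWitness m m sq
  unit : BicomodHom (idBicomod mc) m
  mul : BicomodHom sq m
  left_unit : ∀ L : PolyFHom m.carrier sq.carrier,
    L.comp w.incl = m.coactL.comp (hcomp unit.val (PolyFHom.id m.carrier)) →
    L.comp mul.val = PolyFHom.id m.carrier
  right_unit : ∀ L : PolyFHom m.carrier sq.carrier,
    L.comp w.incl = m.coactR.comp (hcomp (PolyFHom.id m.carrier) unit.val) →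
    L.comp mul.val = PolyFHom.id m.carrier
  cube : Bicomod c c mc mc
  wc : CompositeWitness sq m cube
  cube' : Bicomod c c mc mc
  wc' : CompositeWitness m sq cube'
  mul_assoc : ∀ (A : PolyFHom cube.carrier cube'.carrier)
      (L1 : PolyFHom cube.carrier sq.carrier) (L2 : PolyFHom cube'.carrier sq.carrier),
    A.comp (wc'.incl.comp (hcomp (PolyFHom.id m.carrier) w.incl))
      = wc.incl.comp ((hcomp w.incl (PolyFHom.id m.carrier)).comp
          (assocHom m.carrier m.carrier m.carrier)) →
    L1.comp w.incl = wc.incl.comp (hcomp mul.val (PolyFHom.id m.carrier)) →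
    L2.comp w.incl = wc'.incl.comp (hcomp (PolyFHom.id m.carrier) mul.val) →
    L1.comp mul.val = A.comp (L2.comp mul.val)

/-- A comonad on `d` in the bicategory of polynomial comonoids and bicomodules. -/
structure ComonadOn {d : PolyF} {md : ComonoidStruct d} (E : Bicomod d d md md) where
  sq : Bicomod d d md md
  w : CompositeWitness E E sq
  counit : BicomodHom E (idBicomod md)
  comul : BicomodHom E sq
  left_counit : comul.val.comp (w.incl.comp (hcomp counit.val (PolyFHom.id E.carrier)))
    = E.coactL
  right_counit : comul.val.comp (w.incl.comp (hcomp (PolyFHom.id E.carrier) counit.val))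
    = E.coactR
  coassoc : comul.val.comp (w.incl.comp ((hcomp comul.val (PolyFHom.id E.carrier)).comp
      ((hcomp w.incl (PolyFHom.id E.carrier)).comp
        (assocHom E.carrier E.carrier E.carrier))))
    = comul.val.comp (w.incl.comp ((hcomp (PolyFHom.id E.carrier) comul.val).comp
        (hcomp (PolyFHom.id E.carrier) w.incl)))

/-- A left module over a monad `m` in the bicategory of comonoids and bicomodules. -/
structure ModuleOn {c b : PolyF} {mc : ComonoidStruct c} {mb : ComonoidStruct b}
    (m : Bicomod c c mc mc) (M : MonadOn m) (A : Bicomod c b mc mb) where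
  mA : Bicomod c b mc mb
  w : CompositeWitness m A mA
  act : BicomodHom mA A
  unit_law : ∀ L : PolyFHom A.carrier mA.carrier,
    L.comp w.incl = A.coactL.comp (hcomp M.unit.val (PolyFHom.id A.carrier)) →
    L.comp act.val = PolyFHom.id A.carrier
  sqA : Bicomod c b mc mb
  wsq : CompositeWitness M.sq A sqA
  assoc_law : ∀ (L0 : PolyFHom sqA.carrier (polyComp m.carrier mA.carrier))
      (L1 L2 : PolyFHom sqA.carrier mA.carrier),
    L0.comp (hcomp (PolyFHom.id m.carrier) w.incl)
      = wsq.incl.comp ((hcomp M.w.incl (PolyFHom.id A.carrier)).comp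
          (assocHom m.carrier m.carrier A.carrier)) →
    L1.comp w.incl = wsq.incl.comp (hcomp M.mul.val (PolyFHom.id A.carrier)) →
    L2.comp w.incl = L0.comp (hcomp (PolyFHom.id m.carrier) act.val) →
    L1.comp act.val = L2.comp act.val

/-- A witness that `E` is the right coclosure `⟨p, q⟩`, i.e. that `− ◁_d q` applied to `E`
is couniversal among `(d,d)`-bicomodules receiving a map from `p`. -/
structure CoclosureWitness {d c : PolyF} {md : ComonoidStruct d} {mc : ComonoidStruct c}
    (p q : Bicomod d c md mc) (E : Bicomod d d md md) where
  cw : ∀ r : Bicomod d d md md, (B : Bicomod d c md mc) × CompositeWitness r q B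
  equiv : ∀ r : Bicomod d d md md, BicomodHom E r ≃ BicomodHom p (cw r).1
  natural : ∀ (r r' : Bicomod d d md md) (g : BicomodHom r r')
      (h : PolyFHom (cw r).1.carrier (cw r').1.carrier),
    h.comp (cw r').2.incl = (cw r).2.incl.comp (hcomp g.val (PolyFHom.id q.carrier)) →
    ∀ (f : BicomodHom E r) (fg : BicomodHom E r'), fg.val = f.val.comp g.val →
    ((equiv r') fg).val = ((equiv r) f).val.comp h

-- tests

/-- Evaluation of a polynomial functor at a set. -/
def pEval (p : PolyF) (X : Type) : Type := Σ a : p.pos, p.dir a → X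

/-- The internal hom `[q,p]` for the Dirichlet tensor product. -/
def ihom (q p : PolyF) : PolyF :=
  ⟨PolyFHom q p, fun φ => Σ I : q.pos, p.dir (φ.onPos I)⟩

/-- The canonical duoidal map `S·y ⊗ p → S·y ◁ p`. -/
def duoLin (S : Type) (p : PolyF) : PolyFHom (tens (lin S) p) (polyComp (lin S) p) :=
  ⟨fun x => ⟨x.1, fun _ => x.2⟩, fun _ d => (d.1, d.2)⟩

/-- The canonical duoidal map `p ⊗ y^T → p ◁ y^T`. -/
def duoRep (p : PolyF) (T : Type) : PolyFHom (tens p (rep T)) (polyComp p (rep T)) :=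
  ⟨fun x => ⟨x.1, fun _ => PUnit.unit⟩, fun _ d => (d.1, d.2)⟩

/-- A category structure with objects the positions of `c` and morphisms out of `C` the
directions `c.dir C`. -/
structure CatStruct (c : PolyF) where
  cod : ∀ {C : c.pos}, c.dir C → c.pos
  ident : ∀ C : c.pos, c.dir C
  compose : ∀ {C : c.pos} (f : c.dir C), c.dir (cod f) → c.dir C
  cod_ident : ∀ C : c.pos, cod (ident C) = C
  cod_compose : ∀ {C : c.pos} (f : c.dir C) (g : c.dir (cod f)),
    cod (compose f g) = cod g
  compose_ident_right : ∀ {C : c.pos} (f : c.dir C), compose f (ident (cod f)) = f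
  compose_ident_left : ∀ {C : c.pos} (g : c.dir C),
    compose (ident C) (cast (congrArg c.dir (cod_ident C)).symm g) = g
  compose_assoc : ∀ {C : c.pos} (f : c.dir C) (g : c.dir (cod f))
      (h : c.dir (cod (compose f g))),
    compose (compose f g) h = compose f (compose g (cast (congrArg c.dir (cod_compose f g)) h))

/-- Coproduct of polynomials. -/
def psum (p q : PolyF) : PolyF := ⟨Sum p.pos q.pos, Sum.elim p.dir q.dir⟩

def sumMap {p p' q q' : PolyF} (f : PolyFHom p p') (g : PolyFHom q q') :
    PolyFHom (psum p q) (psum p' q') where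
  onPos := Sum.map f.onPos g.onPos
  onDir := fun x => match x with
    | Sum.inl a => f.onDir a
    | Sum.inr b => g.onDir b

/-- The fold map `y + y → y`. -/
def foldY : PolyFHom (psum yPoly yPoly) yPoly where
  onPos := fun _ => PUnit.unit
  onDir := fun x => match x with
    | Sum.inl _ => fun u => u
    | Sum.inr _ => fun u => u

/-- The duoidal interchange `(p ◁ q) + (r ◁ s) → (p + r) ◁ (q + s)`. -/
def duoSum (p q r s : PolyF) :
    PolyFHom (psum (polyComp p q) (polyComp r s)) (polyComp (psum p r) (psum q s)) where
  onPos := fun x => match x with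
    | Sum.inl y => ⟨Sum.inl y.1, fun i => Sum.inl (y.2 i)⟩
    | Sum.inr y => ⟨Sum.inr y.1, fun i => Sum.inr (y.2 i)⟩
  onDir := fun x => match x with
    | Sum.inl _ => fun d => ⟨d.1, d.2⟩
    | Sum.inr _ => fun d => ⟨d.1, d.2⟩

def tensMap {p p' q q' : PolyF} (f : PolyFHom p p') (g : PolyFHom q q') :
    PolyFHom (tens p q) (tens p' q') :=
  ⟨fun x => (f.onPos x.1, g.onPos x.2), fun x d => (f.onDir x.1 d.1, g.onDir x.2 d.2)⟩

/-- The isomorphism `y ⊗ y → y`. -/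
def tensUnitY : PolyFHom (tens yPoly yPoly) yPoly :=
  ⟨fun _ => PUnit.unit, fun _ _ => (PUnit.unit, PUnit.unit)⟩

/-- The duoidal interchange `(p ◁ q) ⊗ (r ◁ s) → (p ⊗ r) ◁ (q ⊗ s)`. -/
def duoTens (p q r s : PolyF) :
    PolyFHom (tens (polyComp p q) (polyComp r s)) (polyComp (tens p r) (tens q s)) :=
  ⟨fun x => ⟨(x.1.1, x.2.1), fun ij => (x.1.2 ij.1, x.2.2 ij.2)⟩,
   fun _ d => (⟨d.1.1, d.2.1⟩, ⟨d.1.2, d.2.2⟩)⟩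

/-- Binary product of polynomials. -/
def pprod (p q : PolyF) : PolyF := ⟨p.pos × q.pos, fun x => Sum (p.dir x.1) (q.dir x.2)⟩

def prodMap {p p' q q' : PolyF} (f : PolyFHom p p') (g : PolyFHom q q') :
    PolyFHom (pprod p q) (pprod p' q') :=
  ⟨fun x => (f.onPos x.1, g.onPos x.2),
   fun x d => Sum.elim (fun a => Sum.inl (f.onDir x.1 a)) (fun b => Sum.inr (g.onDir x.2 b)) d⟩

/-- The tower `p⁽⁰⁾ = y`, `p⁽ⁿ⁺¹⁾ = y × (p ◁ p⁽ⁿ⁾)`. -/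
def iter (p : PolyF) : ℕ → PolyF
  | 0 => yPoly
  | n+1 => pprod yPoly (polyComp p (iter p n))

/-- The projections `p⁽ⁿ⁺¹⁾ → p⁽ⁿ⁾`. -/
def projIter (p : PolyF) : ∀ n : ℕ, PolyFHom (iter p (n+1)) (iter p n)
  | 0 => ⟨fun _ => PUnit.unit, fun _ _ => Sum.inl PUnit.unit⟩
  | n+1 => prodMap (PolyFHom.id yPoly) (hcomp (PolyFHom.id p) (projIter p n))

/-- The carrier of the cofree comonoid on `p`: the limit of the tower `p⁽ⁿ⁾`,
with directions the colimit of the direction sets along the tower. -/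
def cofreeP (p : PolyF) : PolyF where
  pos := {f : ∀ n : ℕ, (iter p n).pos // ∀ n : ℕ, (projIter p n).onPos (f (n+1)) = f n}
  dir := fun f => Quot (fun x y : Σ n : ℕ, (iter p n).dir (f.1 n) =>
    y = ⟨x.1 + 1, (projIter p x.1).onDir (f.1 (x.1+1))
      (cast (congrArg (iter p x.1).dir (f.2 x.1).symm) x.2)⟩)

/-- The projection `c⁀p → y` onto `p⁽⁰⁾`. -/
def projZero (p : PolyF) : PolyFHom (cofreeP p) yPoly :=
  ⟨fun _ => PUnit.unit, fun f _ => Quot.mk _ ⟨0, PUnit.unit⟩⟩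

/-- The projection `c⁀p → p`, via `p⁽¹⁾ = y × (p ◁ y) → p`. -/
def projP (p : PolyF) : PolyFHom (cofreeP p) p :=
  ⟨fun f => ((f.1 1).2).1, fun f d => Quot.mk _ ⟨1, Sum.inr ⟨d, PUnit.unit⟩⟩⟩

/-- The effects-handler axioms for `φ : s ◁ d → c ◁ s`. -/
def IsHandler {c d : PolyF} (mc : ComonoidStruct c) (md : ComonoidStruct d) (s : PolyF)
    (φ : PolyFHom (polyComp s d) (polyComp c s)) : Prop :=
  φ.comp ((hcomp mc.counit (PolyFHom.id s)).comp (lunitor s))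
    = (hcomp (PolyFHom.id s) md.counit).comp (runitor s)
  ∧ (hcomp (PolyFHom.id s) md.comul).comp ((assocInv s d d).comp
      ((hcomp φ (PolyFHom.id d)).comp ((assocHom c s d).comp (hcomp (PolyFHom.id c) φ))))
    = φ.comp ((hcomp mc.comul (PolyFHom.id s)).comp (assocHom c c s))

/-- The left coaction `s ◁ d → c ◁ (s ◁ d)` induced by an effects handler `φ`. -/
def handlerCoactL {c d : PolyF} (md : ComonoidStruct d) (s : PolyF)
    (φ : PolyFHom (polyComp s d) (polyComp c s)) :
    PolyFHom (polyComp s d) (polyComp c (polyComp s d)) :=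
  (hcomp (PolyFHom.id s) md.comul).comp ((assocInv s d d).comp
    ((hcomp φ (PolyFHom.id d)).comp (assocHom c s d)))

/-- The right coaction `s ◁ d → (s ◁ d) ◁ d` induced by comultiplication. -/
def handlerCoactR {d : PolyF} (md : ComonoidStruct d) (s : PolyF) :
    PolyFHom (polyComp s d) (polyComp (polyComp s d) d) :=
  (hcomp (PolyFHom.id s) md.comul).comp (assocInv s d d)

/-- A witness that `B` is the equalizer of the two canonical maps `p ◁ q ⇉ p ◁ dm ◁ q`
determined by a right coaction on `p` and a left coaction on `q`. -/
structure EqualizerWitness {p dm q : PolyF} (ρ : PolyFHom p (polyComp p dm))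
    (lam : PolyFHom q (polyComp dm q)) (B : PolyF) where
  incl : PolyFHom B (polyComp p q)
  equalizes : incl.comp ((hcomp ρ (PolyFHom.id q)).comp (assocHom p dm q))
    = incl.comp (hcomp (PolyFHom.id p) lam)
  lift : ∀ (X : PolyF) (h : PolyFHom X (polyComp p q)),
    h.comp ((hcomp ρ (PolyFHom.id q)).comp (assocHom p dm q))
      = h.comp (hcomp (PolyFHom.id p) lam) →
    ∃! l : PolyFHom X B, l.comp incl = h

/-- The discrete comonoid (discrete category) on a set `A`. -/
def discreteComon (A : Type) : ComonoidStruct (lin A) where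
  counit := ⟨fun _ => PUnit.unit, fun _ _ => PUnit.unit⟩
  comul := ⟨fun a => ⟨a, fun _ => a⟩, fun _ _ => PUnit.unit⟩
  counit_left := rfl
  counit_right := rfl
  coassoc := rfl

/-- The bicomodule between discrete comonoids given by a span
`A ← (total space of P) → P.pos → A`. -/
def spanBicomod (A : Type) (P : PolyF) (f : P.pos → A) (g : ∀ x, P.dir x → A) :
    Bicomod (lin A) (lin A) (discreteComon A) (discreteComon A) where
  carrier := P
  coactL := ⟨fun x => ⟨f x, fun _ => x⟩, fun _ d => d.2⟩
  coactR := ⟨fun x => ⟨x, fun i => g x i⟩, fun _ d => d.1⟩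
  counitL := rfl
  coassocL := rfl
  counitR := rfl
  coassocR := rfl
  compat := rfl

namespace CFH
open PolyFHom

-- composition toolkit
theorem comp_assoc' {p q r t : PolyF} (f : PolyFHom p q) (g : PolyFHom q r) (h : PolyFHom r t) :
    (f.comp g).comp h = f.comp (g.comp h) := rfl

theorem comp_id {p q : PolyF} (f : PolyFHom p q) : f.comp (PolyFHom.id q) = f := rfl
theorem id_comp {p q : PolyF} (f : PolyFHom p q) : (PolyFHom.id p).comp f = f := rfl

theorem hcomp_id (p q : PolyF) :
    hcomp (PolyFHom.id p) (PolyFHom.id q) = PolyFHom.id (polyComp p q) := rfl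

theorem hcomp_comp {p p' p'' q q' q'' : PolyF} (f : PolyFHom p p') (f' : PolyFHom p' p'')
    (g : PolyFHom q q') (g' : PolyFHom q' q'') :
    hcomp (f.comp f') (g.comp g') = (hcomp f g).comp (hcomp f' g') := rfl

theorem assoc_nat {p p' q q' r r' : PolyF} (f : PolyFHom p p') (g : PolyFHom q q')
    (h : PolyFHom r r') :
    (assocHom p q r).comp (hcomp f (hcomp g h))
      = (hcomp (hcomp f g) h).comp (assocHom p' q' r') := rfl

theorem assocInv_nat {p p' q q' r r' : PolyF} (f : PolyFHom p p') (g : PolyFHom q q')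
    (h : PolyFHom r r') :
    (assocInv p q r).comp (hcomp (hcomp f g) h)
      = (hcomp f (hcomp g h)).comp (assocInv p' q' r') := rfl

theorem assoc_assocInv (p q r : PolyF) :
    (assocHom p q r).comp (assocInv p q r) = PolyFHom.id _ := rfl
theorem assocInv_assoc (p q r : PolyF) :
    (assocInv p q r).comp (assocHom p q r) = PolyFHom.id _ := rfl

theorem lunitorInv_lunitor (pp : PolyF) : (lunitorInv pp).comp (lunitor pp) = PolyFHom.id pp := rfl
theorem lunitor_lunitorInv (pp : PolyF) : (lunitor pp).comp (lunitorInv pp) = PolyFHom.id _ := rfl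
theorem runitorInv_runitor (pp : PolyF) : (runitorInv pp).comp (runitor pp) = PolyFHom.id pp := rfl
theorem runitor_runitorInv (pp : PolyF) : (runitor pp).comp (runitorInv pp) = PolyFHom.id _ := rfl

theorem lunitorInv_nat {a b : PolyF} (f : PolyFHom a b) :
    f.comp (lunitorInv b) = (lunitorInv a).comp (hcomp (PolyFHom.id yPoly) f) := rfl
theorem runitor_nat {a b : PolyF} (f : PolyFHom a b) :
    (runitor a).comp f = (hcomp f (PolyFHom.id yPoly)).comp (runitor b) := rfl
theorem lunitor_nat {a b : PolyF} (f : PolyFHom a b) :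
    (lunitor a).comp f = (hcomp (PolyFHom.id yPoly) f).comp (lunitor b) := rfl

theorem lunitorInv_hcomp (a b : PolyF) :
    (hcomp (lunitorInv a) (PolyFHom.id b)).comp (assocHom yPoly a b)
      = lunitorInv (polyComp a b) := rfl

end CFH
namespace CFH

/-- Pointwise extensionality for polynomial morphisms. -/
theorem homext {P Q : PolyF} {F G : PolyFHom P Q} (hpos : ∀ a, F.onPos a = G.onPos a)
    (hdir : ∀ a (d : Q.dir (G.onPos a)),
      F.onDir a (cast (congrArg Q.dir (hpos a)).symm d) = G.onDir a d) : F = G := by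
  obtain ⟨Fp, Fd⟩ := F
  obtain ⟨Gp, Gd⟩ := G
  have h : Fp = Gp := funext hpos
  subst h
  have h2 : Fd = Gd := by
    funext a d
    have := hdir a d
    simpa using this
  rw [h2]

theorem onPos_congr {P Q : PolyF} {F G : PolyFHom P Q} (h : F = G) (a : P.pos) :
    F.onPos a = G.onPos a := by rw [h]

theorem onDir_congr {P Q : PolyF} {F G : PolyFHom P Q} (h : F = G) (a : P.pos)
    (d : Q.dir (G.onPos a)) :
    F.onDir a (cast (congrArg Q.dir (onPos_congr h a)).symm d) = G.onDir a d := by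
  subst h; rfl

variable {p : PolyF}

/-- The projection `c⁀p → p⁽ⁿ⁾`. -/
def pi (p : PolyF) (n : ℕ) : PolyFHom (cofreeP p) (iter p n) :=
  ⟨fun f => f.1 n, fun _ d => Quot.mk _ ⟨n, d⟩⟩

theorem pi_zero (p : PolyF) : pi p 0 = projZero p := by
  apply homext (fun a => rfl)
  intro a d
  rfl

end CFH
namespace CFH

variable {p : PolyF}

theorem cpos_ext {s : PolyF} (a b : (polyComp (cofreeP p) s).pos)
    (h : ∀ n, (⟨a.1.1 n, fun d => a.2 (Quot.mk _ ⟨n, d⟩)⟩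
        : Σ i : (iter p n).pos, ((iter p n).dir i → s.pos))
      = ⟨b.1.1 n, fun d => b.2 (Quot.mk _ ⟨n, d⟩)⟩) : a = b := by
  obtain ⟨⟨f, hf⟩, g⟩ := a
  obtain ⟨⟨f', hf'⟩, g'⟩ := b
  have hff : f = f' := funext fun n => congrArg Sigma.fst (h n)
  subst hff
  have h2 : ∀ n, (fun d => g (Quot.mk _ ⟨n, d⟩)) = (fun d => g' (Quot.mk _ ⟨n, d⟩)) := by
    intro n
    have := h n
    injection this with h1 h2
  have hg : g = g' := by
    funext q
    induction q using Quot.ind with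
    | _ nd =>
      obtain ⟨n, d⟩ := nd
      exact congrFun (h2 n) d
  subst hg
  rfl

/-- Maps into `c⁀p ◁ s` are determined by their composites with the projections. -/
theorem limit_ext {X s : PolyF} {F G : PolyFHom X (polyComp (cofreeP p) s)}
    (h : ∀ n, F.comp (hcomp (pi p n) (PolyFHom.id s))
      = G.comp (hcomp (pi p n) (PolyFHom.id s))) : F = G := by
  obtain ⟨Fp, Fd⟩ := F
  obtain ⟨Gp, Gd⟩ := G
  have hp : Fp = Gp := by
    funext x
    exact cpos_ext _ _ (fun n => onPos_congr (h n) x)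
  subst hp
  have hd : Fd = Gd := by
    funext x dd
    obtain ⟨q, j⟩ := dd
    induction q using Quot.ind with
    | _ nd =>
      obtain ⟨n, d⟩ := nd
      have := onDir_congr (h n) x ⟨d, j⟩
      exact this
  rw [hd]

def pfst (a b : PolyF) : PolyFHom (pprod a b) a := ⟨Prod.fst, fun _ d => Sum.inl d⟩
def psnd (a b : PolyF) : PolyFHom (pprod a b) b := ⟨Prod.snd, fun _ d => Sum.inr d⟩

theorem ppos_ext {a b s : PolyF} (u v : (polyComp (pprod a b) s).pos)
    (h1 : (⟨u.1.1, fun d => u.2 (Sum.inl d)⟩ : Σ i : a.pos, (a.dir i → s.pos))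
        = ⟨v.1.1, fun d => v.2 (Sum.inl d)⟩)
    (h2 : (⟨u.1.2, fun d => u.2 (Sum.inr d)⟩ : Σ i : b.pos, (b.dir i → s.pos))
        = ⟨v.1.2, fun d => v.2 (Sum.inr d)⟩) : u = v := by
  obtain ⟨⟨A, B⟩, g⟩ := u
  obtain ⟨⟨A', B'⟩, g'⟩ := v
  have hA : A = A' := congrArg Sigma.fst h1
  have hB : B = B' := congrArg Sigma.fst h2
  subst hA; subst hB
  injection h1 with _ h1'
  injection h2 with _ h2'
  have hg : g = g' := by
    funext d
    cases d with
    | inl d => exact congrFun h1' d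
    | inr d => exact congrFun h2' d
  subst hg
  rfl

/-- Maps into `(a × b) ◁ s` are jointly determined by the two projections. -/
theorem prod_ext {X a b s : PolyF} {F G : PolyFHom X (polyComp (pprod a b) s)}
    (h1 : F.comp (hcomp (pfst a b) (PolyFHom.id s)) = G.comp (hcomp (pfst a b) (PolyFHom.id s)))
    (h2 : F.comp (hcomp (psnd a b) (PolyFHom.id s)) = G.comp (hcomp (psnd a b) (PolyFHom.id s))) :
    F = G := by
  obtain ⟨Fp, Fd⟩ := F
  obtain ⟨Gp, Gd⟩ := G
  have hp : Fp = Gp := by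
    funext x
    exact ppos_ext _ _ (onPos_congr h1 x) (onPos_congr h2 x)
  subst hp
  have hd : Fd = Gd := by
    funext x dd
    obtain ⟨d, j⟩ := dd
    cases d with
    | inl d => exact onDir_congr h1 x ⟨d, j⟩
    | inr d => exact onDir_congr h2 x ⟨d, j⟩
  rw [hd]

end CFH
namespace CFH

variable {p : PolyF}

theorem cast_inl {n : ℕ} {x y : (iter p (n+1)).pos} (h : x = y) (u : PUnit) :
    cast (congrArg (iter p (n+1)).dir h) (Sum.inl u) = Sum.inl u := by subst h; rfl

theorem cast_inr {n : ℕ} {x y : (iter p (n+1)).pos} (h : x = y) (i : p.dir x.2.1)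
    (d : (iter p n).dir (x.2.2 i)) :
    cast (congrArg (iter p (n+1)).dir h) (Sum.inr ⟨i, d⟩)
      = Sum.inr ⟨cast (congrArg (fun z : (iter p (n+1)).pos => p.dir z.2.1) h) i,
          cast (by subst h; rfl) d⟩ := by subst h; rfl

section Ana

variable {W : PolyF}

/-- The level-`n` unfolding of a `p`-coalgebra. -/
def unf (lam : PolyFHom W (polyComp p W)) : ∀ n : ℕ, W.pos → (iter p n).pos
  | 0, _ => PUnit.unit
  | n+1, w => ⟨PUnit.unit, ⟨(lam.onPos w).1, fun i => unf lam n ((lam.onPos w).2 i)⟩⟩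

theorem unf_compat (lam : PolyFHom W (polyComp p W)) :
    ∀ (n : ℕ) (w : W.pos), (projIter p n).onPos (unf lam (n+1) w) = unf lam n w := by
  intro n
  induction n with
  | zero => intro w; rfl
  | succ n ih =>
    intro w
    exact congrArg
      (fun k : p.dir (lam.onPos w).1 → (iter p n).pos =>
        (⟨PUnit.unit, ⟨(lam.onPos w).1, k⟩⟩ : (iter p (n+1)).pos))
      (funext fun i => ih ((lam.onPos w).2 i))

/-- Leaf state and backwards direction map for a finite path in the unfolding. -/
def LB (lam : PolyFHom W (polyComp p W)) :
    ∀ (n : ℕ) (w : W.pos), (iter p n).dir (unf lam n w) → Σ w' : W.pos, (W.dir w' → W.dir w)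
  | 0, w, _ => ⟨w, fun d => d⟩
  | n+1, w, d => match d with
    | Sum.inl _ => ⟨w, fun dd => dd⟩
    | Sum.inr dd =>
        ⟨(LB lam n ((lam.onPos w).2 dd.1) dd.2).1,
         fun e => lam.onDir w ⟨dd.1, (LB lam n ((lam.onPos w).2 dd.1) dd.2).2 e⟩⟩

theorem LB_push (lam : PolyFHom W (polyComp p W)) :
    ∀ (n : ℕ) (w : W.pos) (d : (iter p n).dir (unf lam n w)),
    LB lam (n+1) w ((projIter p n).onDir (unf lam (n+1) w)
      (cast (congrArg (iter p n).dir (unf_compat lam n w).symm) d)) = LB lam n w d := by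
  intro n
  induction n with
  | zero => intro w d; rfl
  | succ n ih =>
    intro w d
    cases d with
    | inl u =>
      rw [cast_inl (unf_compat lam (n+1) w).symm u]
      rfl
    | inr dd =>
      obtain ⟨i, d⟩ := dd
      rw [cast_inr (unf_compat lam (n+1) w).symm i d]
      show (⟨(LB lam (n+1) ((lam.onPos w).2 i) ((projIter p n).onDir
                (unf lam (n+1) ((lam.onPos w).2 i))
                (cast (congrArg (iter p n).dir (unf_compat lam n ((lam.onPos w).2 i)).symm) d))).1,
             fun e => lam.onDir w ⟨i, (LB lam (n+1) ((lam.onPos w).2 i) ((projIter p n).onDir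
                (unf lam (n+1) ((lam.onPos w).2 i))
                (cast (congrArg (iter p n).dir (unf_compat lam n ((lam.onPos w).2 i)).symm) d))).2 e⟩⟩
            : Σ w' : W.pos, (W.dir w' → W.dir w))
        = ⟨(LB lam n ((lam.onPos w).2 i) d).1,
             fun e => lam.onDir w ⟨i, (LB lam n ((lam.onPos w).2 i) d).2 e⟩⟩
      rw [ih ((lam.onPos w).2 i) d]

end Ana

end CFH
namespace CFH

variable {p W : PolyF}

/-- The full unfolding tree of a coalgebra state. -/
def tw (lam : PolyFHom W (polyComp p W)) (w : W.pos) : (cofreeP p).pos :=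
  ⟨fun n => unf lam n w, fun n => unf_compat lam n w⟩

def LBq (lam : PolyFHom W (polyComp p W)) (w : W.pos) :
    (cofreeP p).dir (tw lam w) → Σ w' : W.pos, (W.dir w' → W.dir w) :=
  Quot.lift (fun nd => LB lam nd.1 w nd.2) (by
    rintro ⟨n, d⟩ y h
    subst h
    exact (LB_push lam n w d).symm)

/-- The anamorphism `W → c⁀p ◁ W` of a `p`-coalgebra. -/
def ana (lam : PolyFHom W (polyComp p W)) : PolyFHom W (polyComp (cofreeP p) W) :=
  ⟨fun w => ⟨tw lam w, fun q => (LBq lam w q).1⟩,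
   fun w dd => (LBq lam w dd.1).2 dd.2⟩

theorem ana_pi0 (lam : PolyFHom W (polyComp p W)) :
    (ana lam).comp (hcomp (pi p 0) (PolyFHom.id W)) = lunitorInv W := rfl

theorem ana_fst (lam : PolyFHom W (polyComp p W)) (n : ℕ) :
    (ana lam).comp (hcomp ((pi p (n+1)).comp (pfst yPoly (polyComp p (iter p n))))
      (PolyFHom.id W)) = lunitorInv W := rfl

theorem ana_snd (lam : PolyFHom W (polyComp p W)) (n : ℕ) :
    (ana lam).comp (hcomp ((pi p (n+1)).comp (psnd yPoly (polyComp p (iter p n))))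
      (PolyFHom.id W))
    = lam.comp ((hcomp (PolyFHom.id p) ((ana lam).comp (hcomp (pi p n) (PolyFHom.id W)))).comp
        (assocInv p (iter p n) W)) := rfl

end CFH
namespace CFH

variable {p : PolyF}

/-- Uniqueness specification for anamorphism-shaped maps. -/
structure AnaSpecP {W X : PolyF} (lam : PolyFHom W (polyComp p W))
    (η : PolyFHom W (polyComp yPoly X)) (F : PolyFHom W (polyComp (cofreeP p) X)) : Prop where
  eq0 : F.comp (hcomp (pi p 0) (PolyFHom.id X)) = η
  eqfst : ∀ n, F.comp (hcomp ((pi p (n+1)).comp (pfst yPoly (polyComp p (iter p n))))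
    (PolyFHom.id X)) = η
  eqsnd : ∀ n, F.comp (hcomp ((pi p (n+1)).comp (psnd yPoly (polyComp p (iter p n))))
      (PolyFHom.id X))
    = lam.comp ((hcomp (PolyFHom.id p) (F.comp (hcomp (pi p n) (PolyFHom.id X)))).comp
        (assocInv p (iter p n) X))

theorem anaSpec_unique {W X : PolyF} {lam : PolyFHom W (polyComp p W)}
    {η : PolyFHom W (polyComp yPoly X)} {F G : PolyFHom W (polyComp (cofreeP p) X)}
    (h1 : AnaSpecP lam η F) (h2 : AnaSpecP lam η G) : F = G := by
  apply limit_ext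
  intro n
  induction n with
  | zero => rw [h1.eq0, h2.eq0]
  | succ n ih =>
    apply prod_ext
    · exact (h1.eqfst n).trans (h2.eqfst n).symm
    · refine (h1.eqsnd n).trans ?_
      rw [ih]
      exact (h2.eqsnd n).symm

theorem ana_spec {W : PolyF} (lam : PolyFHom W (polyComp p W)) :
    AnaSpecP lam (lunitorInv W) (ana lam) :=
  ⟨ana_pi0 lam, ana_fst lam, ana_snd lam⟩

-- ### the `out` map of the cofree comonoid

theorem pos_snd_congr {n : ℕ} {x y : (iter p (n+1)).pos} (h : x = y) (i : p.dir y.2.1) :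
    x.2.2 (cast (congrArg p.dir
        (congrArg (fun z : (iter p (n+1)).pos => z.2.1) h)).symm i) = y.2.2 i := by
  subst h; rfl

def bfun (f : (cofreeP p).pos) : p.pos := (f.1 1).2.1

theorem hb : ∀ (n : ℕ) (f : (cofreeP p).pos), (f.1 (n+1)).2.1 = bfun f
  | 0, _ => rfl
  | n+1, f =>
    (congrArg (fun z : (iter p (n+1)).pos => z.2.1) (f.2 (n+1))).trans (hb n f)

def chld (n : ℕ) (f : (cofreeP p).pos) (i : p.dir (bfun f)) : (iter p n).pos :=
  (f.1 (n+1)).2.2 (cast (congrArg p.dir (hb n f)).symm i)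

theorem chld_compat (n : ℕ) (f : (cofreeP p).pos) (i : p.dir (bfun f)) :
    (projIter p n).onPos (chld (n+1) f i) = chld n f i := by
  have h := pos_snd_congr (h := f.2 (n+1))
    (cast (congrArg p.dir (hb n f)).symm i)
  unfold chld
  rw [← h, cast_cast]
  rfl

def shft (f : (cofreeP p).pos) (i : p.dir (bfun f)) : (cofreeP p).pos :=
  ⟨fun n => chld n f i, fun n => chld_compat n f i⟩

theorem push_congr {m : ℕ} (x : (iter p (m+1+1)).pos) (T : Type) (j₁ j₂ : p.dir x.2.1)
    (h : j₁ = j₂) (c₁ : T = (iter p m).dir ((projIter p m).onPos (x.2.2 j₁)))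
    (c₂ : T = (iter p m).dir ((projIter p m).onPos (x.2.2 j₂))) (d : T) :
    (Sum.inr ⟨j₁, (projIter p m).onDir (x.2.2 j₁) (cast c₁ d)⟩ : (iter p (m+1+1)).dir x)
      = Sum.inr ⟨j₂, (projIter p m).onDir (x.2.2 j₂) (cast c₂ d)⟩ := by
  subst h; rfl

theorem proj_push {m : ℕ} (z : (iter p (m+1+1)).pos) {y : (iter p (m+1)).pos}
    (h : (projIter p (m+1)).onPos z = y) (i : p.dir y.2.1) (d : (iter p m).dir (y.2.2 i))
    (h1 : p.dir y.2.1 = p.dir z.2.1)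
    (h2 : (iter p m).dir (y.2.2 i)
      = (iter p m).dir ((projIter p m).onPos (z.2.2 (cast h1 i)))) :
    (projIter p (m+1)).onDir z
        (cast (congrArg (iter p (m+1)).dir h.symm) (Sum.inr ⟨i, d⟩))
      = Sum.inr ⟨cast h1 i, (projIter p m).onDir (z.2.2 (cast h1 i)) (cast h2 d)⟩ := by
  subst h
  rfl

def out : PolyFHom (cofreeP p) (polyComp p (cofreeP p)) where
  onPos f := ⟨bfun f, fun i => shft f i⟩
  onDir f dd := Quot.lift
    (fun md => Quot.mk _ ⟨md.1 + 1,
      Sum.inr ⟨cast (congrArg p.dir (hb md.1 f)).symm dd.1, md.2⟩⟩)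
    (by
      rintro ⟨m, d⟩ y h
      subst h
      apply Quot.sound
      show (⟨m+1+1, _⟩ : Σ n : ℕ, (iter p n).dir (f.1 n)) = ⟨m+1+1, _⟩
      rw [proj_push (f.1 (m+1+1)) (f.2 (m+1))
        (cast (congrArg p.dir (hb m f)).symm dd.1) d
        ((congrArg p.dir (hb m f)).trans (congrArg p.dir (hb (m+1) f)).symm)
        (congrArg (iter p m).dir (by rw [cast_cast]; exact (chld_compat m f dd.1).symm))]
      exact congrArg (Sigma.mk (m+1+1)) (push_congr (f.1 (m+1+1)) _ _ _
        (by rw [cast_cast]) _ _ d)) dd.2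

end CFH
namespace CFH

variable {p : PolyF}

theorem sigma_ext {Z : Type} {b b' : p.pos} (h : b = b') {k : p.dir b → Z}
    {k' : p.dir b' → Z} (hk : ∀ i, k (cast (congrArg p.dir h).symm i) = k' i) :
    (⟨b, k⟩ : Σ x : p.pos, (p.dir x → Z)) = ⟨b', k'⟩ := by
  subst h
  exact congrArg _ (funext fun i => hk i)

theorem comp_dir_cast {A B : PolyF} {x y : (polyComp A B).pos} (h : x = y) (i : A.dir y.1)
    (d : B.dir (y.2 i)) :
    cast (congrArg (polyComp A B).dir h).symm ⟨i, d⟩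
      = ⟨cast (congrArg (fun z : (polyComp A B).pos => A.dir z.1) h).symm i,
         cast (by subst h; rfl) d⟩ := by subst h; rfl

/-- The recursion identity: `π_{n+1} ; snd = out ; (p ◁ π_n)`. -/
theorem outrec (n : ℕ) :
    (pi p (n+1)).comp (psnd yPoly (polyComp p (iter p n)))
      = out.comp (hcomp (PolyFHom.id p) (pi p n)) := by
  apply homext (fun f => sigma_ext (hb n f) (fun i => rfl))
  intro f dd
  obtain ⟨i, d⟩ := dd
  refine (congrArg (((pi p (n+1)).comp (psnd yPoly (polyComp p (iter p n)))).onDir f)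
    (comp_dir_cast (sigma_ext (hb n f) (fun i => rfl)) i d)).trans ?_
  exact congrArg (fun e => (Quot.mk _ ⟨n+1,
    Sum.inr ⟨cast (congrArg p.dir (hb n f)).symm i, e⟩⟩ : (cofreeP p).dir f)) (cast_eq _ d)

/-- The comultiplication of the cofree comonoid. -/
def delta0 : PolyFHom (cofreeP p) (polyComp (cofreeP p) (cofreeP p)) := ana out

theorem out_eq :
    delta0.comp (hcomp (projP p) (PolyFHom.id (cofreeP p))) = (out : PolyFHom (cofreeP p) _) :=
  rfl

def trivDir : ∀ (n : ℕ) (x : (iter p n).pos), (iter p n).dir x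
  | 0, _ => PUnit.unit
  | _+1, _ => Sum.inl PUnit.unit

theorem cast_triv {n : ℕ} {x y : (iter p n).pos} (h : x = y) :
    cast (congrArg (iter p n).dir h) (trivDir n x) = trivDir n y := by subst h; cases n <;> rfl

theorem proj_triv : ∀ (n : ℕ) (z : (iter p (n+1)).pos),
    (projIter p n).onDir z (trivDir n ((projIter p n).onPos z)) = trivDir (n+1) z
  | 0, _ => rfl
  | _+1, _ => rfl

theorem trivial_dir_eq : ∀ (n : ℕ) (f : (cofreeP p).pos),
    (Quot.mk _ ⟨0, PUnit.unit⟩ : (cofreeP p).dir f) = Quot.mk _ ⟨n, trivDir n (f.1 n)⟩ := by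
  intro n
  induction n with
  | zero => intro f; rfl
  | succ n ih =>
    intro f
    refine (ih f).trans ?_
    apply Quot.sound
    show (⟨n+1, trivDir (n+1) (f.1 (n+1))⟩ : Σ m : ℕ, (iter p m).dir (f.1 m)) = _
    refine congrArg (Sigma.mk (n+1)) ?_
    rw [show cast (congrArg (iter p n).dir (f.2 n).symm) (trivDir n (f.1 n))
        = trivDir n ((projIter p n).onPos (f.1 (n+1))) from cast_triv (f.2 n).symm]
    exact (proj_triv n (f.1 (n+1))).symm

theorem pi_fst (n : ℕ) :
    (pi p (n+1)).comp (pfst yPoly (polyComp p (iter p n))) = projZero p := by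
  refine homext (fun f => rfl) fun f d => ?_
  exact (trivial_dir_eq (n+1) f).symm

theorem pi0_eq : (pi p 0) = projZero p := rfl

theorem ppos_ext_p {W : PolyF} (a b : (polyComp p (polyComp (cofreeP p) W)).pos)
    (h : ∀ n, (⟨a.1, fun i => ⟨(a.2 i).1.1 n, fun d => (a.2 i).2 (Quot.mk _ ⟨n, d⟩)⟩⟩
        : Σ bb : p.pos, p.dir bb → (Σ z : (iter p n).pos, ((iter p n).dir z → W.pos)))
      = ⟨b.1, fun i => ⟨(b.2 i).1.1 n, fun d => (b.2 i).2 (Quot.mk _ ⟨n, d⟩)⟩⟩) : a = b := by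
  obtain ⟨b1, g⟩ := a
  obtain ⟨b2, g'⟩ := b
  have hb12 : b1 = b2 := congrArg Sigma.fst (h 0)
  subst hb12
  have hg : g = g' := by
    funext i
    apply cpos_ext
    intro n
    have := h n
    injection this with _ h2
    exact congrFun h2 i
  rw [hg]

/-- Maps into `p ◁ (c⁀p ◁ W)` are determined by the projections of the middle factor. -/
theorem limit_ext_p {X W : PolyF} {F G : PolyFHom X (polyComp p (polyComp (cofreeP p) W))}
    (h : ∀ n, F.comp (hcomp (PolyFHom.id p) (hcomp (pi p n) (PolyFHom.id W)))
      = G.comp (hcomp (PolyFHom.id p) (hcomp (pi p n) (PolyFHom.id W)))) : F = G := by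
  obtain ⟨Fp, Fd⟩ := F
  obtain ⟨Gp, Gd⟩ := G
  have hp : Fp = Gp := by
    funext x
    exact ppos_ext_p _ _ (fun n => onPos_congr (h n) x)
  subst hp
  have hd : Fd = Gd := by
    funext x dd
    obtain ⟨i, q, j⟩ := dd
    induction q using Quot.ind with
    | _ md =>
      obtain ⟨n, d⟩ := md
      exact onDir_congr (h n) x ⟨i, d, j⟩
  rw [hd]

end CFH
namespace CFH

variable {p : PolyF}

theorem ana_out {W : PolyF} (lam : PolyFHom W (polyComp p W)) :
    (ana lam).comp ((hcomp out (PolyFHom.id W)).comp (assocHom p (cofreeP p) W))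
      = lam.comp (hcomp (PolyFHom.id p) (ana lam)) := by
  apply limit_ext_p
  intro n
  have h1 : ((ana lam).comp ((hcomp out (PolyFHom.id W)).comp
        (assocHom p (cofreeP p) W))).comp
        (hcomp (PolyFHom.id p) (hcomp (pi p n) (PolyFHom.id W)))
      = ((ana lam).comp (hcomp ((pi p (n+1)).comp (psnd yPoly (polyComp p (iter p n))))
          (PolyFHom.id W))).comp (assocHom p (iter p n) W) := by
    rw [outrec]
    rfl
  rw [h1, ana_snd]
  rfl

theorem ana_out' {W : PolyF} (lam : PolyFHom W (polyComp p W)) :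
    (ana lam).comp (hcomp out (PolyFHom.id W))
      = (lam.comp (hcomp (PolyFHom.id p) (ana lam))).comp (assocInv p (cofreeP p) W) := by
  have h := congrArg (fun H => H.comp (assocInv p (cofreeP p) W)) (ana_out lam)
  exact h

/-- The erased anamorphism is a coalgebra morphism. -/
theorem gout {W : PolyF} (lam : PolyFHom W (polyComp p W)) (e : PolyFHom W yPoly) :
    ((ana lam).comp ((hcomp (PolyFHom.id (cofreeP p)) e).comp (runitor (cofreeP p)))).comp out
      = lam.comp (hcomp (PolyFHom.id p)
          ((ana lam).comp ((hcomp (PolyFHom.id (cofreeP p)) e).comp (runitor (cofreeP p))))) := by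
  have h1 : ((ana lam).comp ((hcomp (PolyFHom.id (cofreeP p)) e).comp
        (runitor (cofreeP p)))).comp out
      = ((ana lam).comp (hcomp out (PolyFHom.id W))).comp
          ((hcomp (PolyFHom.id (polyComp p (cofreeP p))) e).comp
            (runitor (polyComp p (cofreeP p)))) := rfl
  rw [h1, ana_out']
  rfl

theorem limit_ind {X s : PolyF} {F G : PolyFHom X (polyComp (cofreeP p) s)}
    (h0 : F.comp (hcomp (pi p 0) (PolyFHom.id s)) = G.comp (hcomp (pi p 0) (PolyFHom.id s)))
    (hfst : ∀ n, F.comp (hcomp ((pi p (n+1)).comp (pfst yPoly (polyComp p (iter p n))))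
        (PolyFHom.id s))
      = G.comp (hcomp ((pi p (n+1)).comp (pfst yPoly (polyComp p (iter p n)))) (PolyFHom.id s)))
    (hsnd : ∀ n, F.comp (hcomp (pi p n) (PolyFHom.id s)) = G.comp (hcomp (pi p n) (PolyFHom.id s))
      → F.comp (hcomp ((pi p (n+1)).comp (psnd yPoly (polyComp p (iter p n)))) (PolyFHom.id s))
        = G.comp (hcomp ((pi p (n+1)).comp (psnd yPoly (polyComp p (iter p n))))
            (PolyFHom.id s))) :
    F = G := by
  apply limit_ext
  intro n
  induction n with
  | zero => exact h0
  | succ n ih =>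
    apply prod_ext
    · exact hfst n
    · exact hsnd n ih

theorem cancel_runitorInv {X A : PolyF} {F G : PolyFHom X A}
    (h : F.comp (runitorInv A) = G.comp (runitorInv A)) : F = G := by
  have := congrArg (fun H : PolyFHom X (polyComp A yPoly) => H.comp (runitor A)) h
  exact this

theorem limit_ind_plain {X : PolyF} {F G : PolyFHom X (cofreeP p)}
    (h0 : F.comp (pi p 0) = G.comp (pi p 0))
    (hfst : ∀ n, F.comp ((pi p (n+1)).comp (pfst yPoly (polyComp p (iter p n))))
      = G.comp ((pi p (n+1)).comp (pfst yPoly (polyComp p (iter p n)))))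
    (hsnd : ∀ n, F.comp (pi p n) = G.comp (pi p n)
      → F.comp ((pi p (n+1)).comp (psnd yPoly (polyComp p (iter p n))))
        = G.comp ((pi p (n+1)).comp (psnd yPoly (polyComp p (iter p n))))) :
    F = G := by
  apply cancel_runitorInv
  apply limit_ind
  · show (F.comp (pi p 0)).comp (runitorInv _) = (G.comp (pi p 0)).comp (runitorInv _)
    rw [h0]
  · intro n
    show (F.comp ((pi p (n+1)).comp (pfst _ _))).comp (runitorInv _)
      = (G.comp ((pi p (n+1)).comp (pfst _ _))).comp (runitorInv _)
    rw [hfst n]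
  · intro n ih
    have ih' : F.comp (pi p n) = G.comp (pi p n) := by
      have := congrArg (fun H : PolyFHom X (polyComp (iter p n) yPoly)
        => H.comp (runitor (iter p n))) ih
      exact this
    show (F.comp ((pi p (n+1)).comp (psnd _ _))).comp (runitorInv _)
      = (G.comp ((pi p (n+1)).comp (psnd _ _))).comp (runitorInv _)
    rw [hsnd n ih']

theorem delta0_def : (delta0 : PolyFHom (cofreeP p) _) = ana out := rfl

theorem counit_left0 :
    delta0.comp ((hcomp (projZero p) (PolyFHom.id (cofreeP p))).comp (lunitor (cofreeP p)))
      = PolyFHom.id (cofreeP p) := rfl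

theorem counit_right0 :
    delta0.comp ((hcomp (PolyFHom.id (cofreeP p)) (projZero p)).comp (runitor (cofreeP p)))
      = PolyFHom.id (cofreeP p) := by
  apply limit_ind_plain
  · rfl
  · intro n
    rw [pi_fst]
    rfl
  · intro n ih
    rw [outrec n]
    show ((delta0.comp ((hcomp (PolyFHom.id (cofreeP p)) (projZero p)).comp
          (runitor (cofreeP p)))).comp out).comp (hcomp (PolyFHom.id p) (pi p n))
      = out.comp (hcomp (PolyFHom.id p) (pi p n))
    rw [delta0_def, gout out (projZero p)]
    show out.comp (hcomp (PolyFHom.id p)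
        (((ana out).comp ((hcomp (PolyFHom.id (cofreeP p)) (projZero p)).comp
          (runitor (cofreeP p)))).comp (pi p n)))
      = out.comp (hcomp (PolyFHom.id p) (pi p n))
    rw [← delta0_def, ih]
    rfl

end CFH
namespace CFH

variable {p : PolyF}

theorem coassoc0 :
    delta0.comp (hcomp (PolyFHom.id (cofreeP p)) delta0)
      = delta0.comp ((hcomp delta0 (PolyFHom.id (cofreeP p))).comp
          (assocHom (cofreeP p) (cofreeP p) (cofreeP p))) := by
  refine anaSpec_unique (lam := out) (η := delta0.comp (lunitorInv _)) ?_ ?_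
  · constructor
    · show (delta0.comp (hcomp (pi p 0) (PolyFHom.id (cofreeP p)))).comp
          (hcomp (PolyFHom.id yPoly) delta0) = _
      rw [delta0_def, ana_pi0]
      rfl
    · intro n
      show (delta0.comp (hcomp ((pi p (n+1)).comp (pfst _ _)) (PolyFHom.id (cofreeP p)))).comp
          (hcomp (PolyFHom.id yPoly) delta0) = _
      rw [delta0_def, ana_fst]
      rfl
    · intro n
      show (delta0.comp (hcomp ((pi p (n+1)).comp (psnd _ _)) (PolyFHom.id (cofreeP p)))).comp
          (hcomp (PolyFHom.id (polyComp p (iter p n))) delta0) = _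
      rw [delta0_def, ana_snd]
      rfl
  · constructor
    · show (delta0.comp (hcomp (delta0.comp (hcomp (pi p 0) (PolyFHom.id (cofreeP p))))
          (PolyFHom.id (cofreeP p)))).comp (assocHom yPoly (cofreeP p) (cofreeP p)) = _
      rw [delta0_def, ana_pi0]
      rfl
    · intro n
      show (delta0.comp (hcomp (delta0.comp (hcomp ((pi p (n+1)).comp (pfst _ _))
          (PolyFHom.id (cofreeP p)))) (PolyFHom.id (cofreeP p)))).comp
            (assocHom yPoly (cofreeP p) (cofreeP p)) = _
      rw [delta0_def, ana_fst]
      rfl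
    · intro n
      show (delta0.comp (hcomp (delta0.comp (hcomp ((pi p (n+1)).comp (psnd _ _))
          (PolyFHom.id (cofreeP p)))) (PolyFHom.id (cofreeP p)))).comp
            (assocHom (polyComp p (iter p n)) (cofreeP p) (cofreeP p)) = _
      rw [delta0_def, ana_snd]
      show ((delta0.comp (hcomp out (PolyFHom.id (cofreeP p)))).comp
          ((hcomp (hcomp (PolyFHom.id p) ((ana out).comp (hcomp (pi p n)
              (PolyFHom.id (cofreeP p))))) (PolyFHom.id (cofreeP p))).comp
            ((hcomp (assocInv p (iter p n) (cofreeP p)) (PolyFHom.id (cofreeP p))).comp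
              (assocHom (polyComp p (iter p n)) (cofreeP p) (cofreeP p))))) = _
      rw [delta0_def, ana_out']
      rfl

end CFH
namespace CFH

variable {p : PolyF}

/-- The cofree comonoid structure. -/
def M0 (p : PolyF) : ComonoidStruct (cofreeP p) :=
  ⟨projZero p, delta0, counit_left0, counit_right0, coassoc0⟩

section Lift

variable {c0 : PolyF} (m0 : ComonoidStruct c0) (f : PolyFHom c0 p)

def glam : PolyFHom c0 (polyComp p c0) := m0.comul.comp (hcomp f (PolyFHom.id c0))

def gmap : PolyFHom c0 (cofreeP p) :=
  (ana (glam m0 f)).comp ((hcomp (PolyFHom.id (cofreeP p)) m0.counit).comp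
    (runitor (cofreeP p)))

theorem gpi0 : (gmap m0 f).comp (pi p 0) = m0.counit := rfl

theorem grec (n : ℕ) :
    (gmap m0 f).comp ((pi p (n+1)).comp (psnd yPoly (polyComp p (iter p n))))
      = (glam m0 f).comp (hcomp (PolyFHom.id p) ((gmap m0 f).comp (pi p n))) := by
  rw [outrec n]
  show ((gmap m0 f).comp out).comp (hcomp (PolyFHom.id p) (pi p n)) = _
  rw [show (gmap m0 f).comp out
    = (glam m0 f).comp (hcomp (PolyFHom.id p) (gmap m0 f)) from gout _ _]
  rfl

theorem gproj : (gmap m0 f).comp (projP p) = f := by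
  show ((gmap m0 f).comp ((pi p 1).comp (psnd yPoly (polyComp p (iter p 0))))).comp
    (runitor p) = f
  rw [grec m0 f 0]
  show (m0.comul.comp ((hcomp (PolyFHom.id c0) m0.counit).comp (runitor c0))).comp f = f
  rw [m0.counit_right]
  rfl

theorem comul_lunitorInv :
    m0.comul.comp (hcomp m0.counit (PolyFHom.id c0)) = lunitorInv c0 := by
  have := congrArg (fun H : PolyFHom c0 c0 => H.comp (lunitorInv c0)) m0.counit_left
  exact this

theorem comul_runitorInv :
    m0.comul.comp (hcomp (PolyFHom.id c0) m0.counit) = runitorInv c0 := by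
  have := congrArg (fun H : PolyFHom c0 c0 => H.comp (runitorInv c0)) m0.counit_right
  exact this

theorem gcomul :
    (gmap m0 f).comp delta0 = m0.comul.comp (hcomp (gmap m0 f) (gmap m0 f)) := by
  refine anaSpec_unique (lam := glam m0 f)
    (η := (lunitorInv c0).comp (hcomp (PolyFHom.id yPoly) (gmap m0 f))) ?_ ?_
  · constructor
    · show ((gmap m0 f).comp (delta0.comp (hcomp (pi p 0) (PolyFHom.id (cofreeP p))))) = _
      rw [delta0_def, ana_pi0]
      rfl
    · intro n
      show ((gmap m0 f).comp (delta0.comp (hcomp ((pi p (n+1)).comp (pfst _ _))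
        (PolyFHom.id (cofreeP p))))) = _
      rw [delta0_def, ana_fst]
      rfl
    · intro n
      show ((gmap m0 f).comp (delta0.comp (hcomp ((pi p (n+1)).comp (psnd _ _))
        (PolyFHom.id (cofreeP p))))) = _
      rw [delta0_def, ana_snd]
      show (((gmap m0 f).comp out).comp (hcomp (PolyFHom.id p) ((ana out).comp
        (hcomp (pi p n) (PolyFHom.id (cofreeP p)))))).comp
          (assocInv p (iter p n) (cofreeP p)) = _
      rw [show (gmap m0 f).comp out
        = (glam m0 f).comp (hcomp (PolyFHom.id p) (gmap m0 f)) from gout _ _]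
      rfl
  · constructor
    · show (m0.comul.comp (hcomp ((gmap m0 f).comp (pi p 0)) (PolyFHom.id c0))).comp
        (hcomp (PolyFHom.id yPoly) (gmap m0 f)) = _
      rw [gpi0]
      exact congrArg (fun H => H.comp (hcomp (PolyFHom.id yPoly) (gmap m0 f)))
        (comul_lunitorInv (m0 := m0))
    · intro n
      show (m0.comul.comp (hcomp ((gmap m0 f).comp ((pi p (n+1)).comp (pfst _ _)))
          (PolyFHom.id c0))).comp (hcomp (PolyFHom.id yPoly) (gmap m0 f)) = _
      rw [pi_fst]
      rw [show (gmap m0 f).comp (projZero p) = m0.counit from gpi0 m0 f]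
      rw [comul_lunitorInv]
    · intro n
      show (m0.comul.comp (hcomp ((gmap m0 f).comp ((pi p (n+1)).comp (psnd _ _)))
          (PolyFHom.id c0))).comp (hcomp (PolyFHom.id (polyComp p (iter p n))) (gmap m0 f)) = _
      rw [grec m0 f n]
      show ((m0.comul.comp ((hcomp m0.comul (PolyFHom.id c0)).comp
          (assocHom c0 c0 c0))).comp ((assocInv c0 c0 c0).comp
            ((hcomp (hcomp f (PolyFHom.id c0)) (PolyFHom.id c0)).comp
              (hcomp (hcomp (PolyFHom.id p) ((gmap m0 f).comp (pi p n))) (gmap m0 f))))) = _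
      rw [← m0.coassoc]
      rfl

theorem glift : IsComonHom m0 (M0 p) (gmap m0 f) ∧ (gmap m0 f).comp (projP p) = f :=
  ⟨⟨gpi0 m0 f, gcomul m0 f⟩, gproj m0 f⟩

end Lift

end CFH
namespace CFH

variable {p : PolyF}

/-- Uniqueness of comonoid homomorphisms into the cofree comonoid. -/
theorem comonhom_unique {c0 : PolyF} (eps : PolyFHom c0 yPoly)
    (del : PolyFHom c0 (polyComp c0 c0)) {g1 g2 : PolyFHom c0 (cofreeP p)}
    (he1 : g1.comp (projZero p) = eps) (he2 : g2.comp (projZero p) = eps)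
    (hd1 : g1.comp delta0 = del.comp (hcomp g1 g1))
    (hd2 : g2.comp delta0 = del.comp (hcomp g2 g2))
    (hproj : g1.comp (projP p) = g2.comp (projP p)) : g1 = g2 := by
  have hout : ∀ (g : PolyFHom c0 (cofreeP p)), g.comp delta0 = del.comp (hcomp g g) →
      g.comp out = del.comp (hcomp (g.comp (projP p)) g) := by
    intro g hd
    show (g.comp delta0).comp (hcomp (projP p) (PolyFHom.id (cofreeP p))) = _
    rw [hd]
    rfl
  apply limit_ind_plain
  · exact he1.trans he2.symm
  · intro n
    rw [pi_fst]
    exact he1.trans he2.symm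
  · intro n ih
    rw [outrec n]
    show (g1.comp out).comp (hcomp (PolyFHom.id p) (pi p n))
      = (g2.comp out).comp (hcomp (PolyFHom.id p) (pi p n))
    rw [hout g1 hd1, hout g2 hd2]
    show del.comp (hcomp (g1.comp (projP p)) (g1.comp (pi p n)))
      = del.comp (hcomp (g2.comp (projP p)) (g2.comp (pi p n)))
    rw [hproj, ih]

end CFH
namespace CFH

variable {p : PolyF}

section Handler

variable (c : PolyF) (mc : ComonoidStruct c) (s : PolyF)
  (φ : PolyFHom (polyComp s c) (polyComp p s))

def hL : PolyFHom (polyComp s c) (polyComp p (polyComp s c)) := handlerCoactL mc s φ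

def hrho : PolyFHom (polyComp s c) s := (hcomp (PolyFHom.id s) mc.counit).comp (runitor s)

def hD : PolyFHom (polyComp s c) (polyComp (polyComp s c) c) :=
  (hcomp (PolyFHom.id s) mc.comul).comp (assocInv s c c)

def Phi : PolyFHom (polyComp s c) (polyComp (cofreeP p) s) :=
  (ana (hL c mc s φ)).comp (hcomp (PolyFHom.id (cofreeP p)) (hrho c mc s))

theorem Phi_proj : (Phi c mc s φ).comp (hcomp (projP p) (PolyFHom.id s)) = φ := by
  show (hcomp (PolyFHom.id s) (mc.comul.comp ((hcomp (PolyFHom.id c) mc.counit).comp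
    (runitor c)))).comp φ = φ
  rw [mc.counit_right]
  rfl

theorem Phi_counit :
    (Phi c mc s φ).comp ((hcomp (projZero p) (PolyFHom.id s)).comp (lunitor s))
      = (hcomp (PolyFHom.id s) mc.counit).comp (runitor s) := rfl

theorem keyL :
    (hD c mc s).comp ((hcomp (hL c mc s φ) (PolyFHom.id c)).comp
      (assocHom p (polyComp s c) c))
    = (hL c mc s φ).comp (hcomp (PolyFHom.id p) (hD c mc s)) := by
  show (hcomp (PolyFHom.id s) (mc.comul.comp ((hcomp mc.comul (PolyFHom.id c)).comp
      (assocHom c c c)))).comp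
      ((assocInv s c (polyComp c c)).comp ((hcomp φ (PolyFHom.id (polyComp c c))).comp
        ((assocHom p s (polyComp c c)).comp (hcomp (PolyFHom.id p) (assocInv s c c)))))
    = _
  rw [← mc.coassoc]
  rfl

theorem Phi_out :
    (Phi c mc s φ).comp (hcomp out (PolyFHom.id s))
      = ((hL c mc s φ).comp (hcomp (PolyFHom.id p) (Phi c mc s φ))).comp
          (assocInv p (cofreeP p) s) := by
  show ((ana (hL c mc s φ)).comp (hcomp out (PolyFHom.id (polyComp s c)))).comp
    (hcomp (PolyFHom.id (polyComp p (cofreeP p))) (hrho c mc s)) = _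
  rw [ana_out']
  rfl

theorem Phi_comul :
    (hcomp (PolyFHom.id s) mc.comul).comp ((assocInv s c c).comp
      ((hcomp (Phi c mc s φ) (PolyFHom.id c)).comp ((assocHom (cofreeP p) s c).comp
        (hcomp (PolyFHom.id (cofreeP p)) (Phi c mc s φ)))))
    = (Phi c mc s φ).comp ((hcomp delta0 (PolyFHom.id s)).comp
        (assocHom (cofreeP p) (cofreeP p) s)) := by
  refine anaSpec_unique (lam := hL c mc s φ)
    (η := (lunitorInv (polyComp s c)).comp (hcomp (PolyFHom.id yPoly) (Phi c mc s φ))) ?_ ?_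
  · constructor
    · show (lunitorInv (polyComp s c)).comp (hcomp (PolyFHom.id yPoly)
        ((hcomp (PolyFHom.id s) (mc.comul.comp ((hcomp mc.counit (PolyFHom.id c)).comp
          (lunitor c)))).comp (Phi c mc s φ))) = _
      rw [mc.counit_left]
      rfl
    · intro n
      show (lunitorInv (polyComp s c)).comp (hcomp (PolyFHom.id yPoly)
        ((hcomp (PolyFHom.id s) (mc.comul.comp ((hcomp mc.counit (PolyFHom.id c)).comp
          (lunitor c)))).comp (Phi c mc s φ))) = _
      rw [mc.counit_left]
      rfl
    · intro n
      show ((hD c mc s).comp ((hcomp (hL c mc s φ) (PolyFHom.id c)).comp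
          (assocHom p (polyComp s c) c))).comp
        ((hcomp (PolyFHom.id p) ((hcomp ((Phi c mc s φ).comp (hcomp (pi p n)
            (PolyFHom.id s))) (PolyFHom.id c)).comp ((assocHom (iter p n) s c).comp
              (hcomp (PolyFHom.id (iter p n)) (Phi c mc s φ))))).comp
          (assocInv p (iter p n) (polyComp (cofreeP p) s))) = _
      rw [keyL]
      rfl
  · constructor
    · show ((Phi c mc s φ).comp (hcomp (delta0.comp (hcomp (pi p 0)
        (PolyFHom.id (cofreeP p)))) (PolyFHom.id s))).comp
          (assocHom yPoly (cofreeP p) s) = _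
      rw [delta0_def, ana_pi0]
      rfl
    · intro n
      show ((Phi c mc s φ).comp (hcomp (delta0.comp (hcomp ((pi p (n+1)).comp (pfst _ _))
        (PolyFHom.id (cofreeP p)))) (PolyFHom.id s))).comp
          (assocHom yPoly (cofreeP p) s) = _
      rw [delta0_def, ana_fst]
      rfl
    · intro n
      show ((Phi c mc s φ).comp (hcomp (delta0.comp (hcomp ((pi p (n+1)).comp (psnd _ _))
        (PolyFHom.id (cofreeP p)))) (PolyFHom.id s))).comp
          (assocHom (polyComp p (iter p n)) (cofreeP p) s) = _
      rw [delta0_def, ana_snd]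
      show (((Phi c mc s φ).comp (hcomp out (PolyFHom.id s))).comp
        ((hcomp (hcomp (PolyFHom.id p) ((ana out).comp (hcomp (pi p n)
          (PolyFHom.id (cofreeP p))))) (PolyFHom.id s)).comp
            ((hcomp (assocInv p (iter p n) (cofreeP p)) (PolyFHom.id s)).comp
              (assocHom (polyComp p (iter p n)) (cofreeP p) s)))) = _
      rw [Phi_out]
      rfl

theorem Phi_handler : IsHandler (M0 p) mc s (Phi c mc s φ) :=
  ⟨Phi_counit c mc s φ, Phi_comul c mc s φ⟩

end Handler

end CFH
namespace CFH

variable {p : PolyF}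

section Unique

variable {c : PolyF} (mc : ComonoidStruct c) (s : PolyF)

def canH (n : ℕ) (A : PolyFHom (polyComp s c) (polyComp p s))
    (B : PolyFHom (polyComp s c) (polyComp (iter p n) s)) :
    PolyFHom (polyComp s c) (polyComp (polyComp p (iter p n)) s) :=
  ((hcomp (PolyFHom.id s) mc.comul).comp ((assocInv s c c).comp
    ((hcomp A (PolyFHom.id c)).comp ((assocHom p s c).comp
      (hcomp (PolyFHom.id p) B))))).comp (assocInv p (iter p n) s)

theorem handler_unique {Ψ1 Ψ2 : PolyFHom (polyComp s c) (polyComp (cofreeP p) s)}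
    (h1 : IsHandler (M0 p) mc s Ψ1) (h2 : IsHandler (M0 p) mc s Ψ2)
    (hp : Ψ1.comp (hcomp (projP p) (PolyFHom.id s))
      = Ψ2.comp (hcomp (projP p) (PolyFHom.id s))) : Ψ1 = Ψ2 := by
  have k : ∀ Ψ : PolyFHom (polyComp s c) (polyComp (cofreeP p) s),
      IsHandler (M0 p) mc s Ψ →
      Ψ.comp (hcomp (pi p 0) (PolyFHom.id s))
        = ((hcomp (PolyFHom.id s) mc.counit).comp (runitor s)).comp (lunitorInv s) := by
    intro Ψ h
    have := congrArg (fun H : PolyFHom (polyComp s c) s => H.comp (lunitorInv s)) h.1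
    exact this
  have ho : ∀ Ψ : PolyFHom (polyComp s c) (polyComp (cofreeP p) s),
      IsHandler (M0 p) mc s Ψ →
      Ψ.comp (hcomp delta0 (PolyFHom.id s))
        = ((hcomp (PolyFHom.id s) mc.comul).comp ((assocInv s c c).comp
            ((hcomp Ψ (PolyFHom.id c)).comp ((assocHom (cofreeP p) s c).comp
              (hcomp (PolyFHom.id (cofreeP p)) Ψ))))).comp
                (assocInv (cofreeP p) (cofreeP p) s) := by
    intro Ψ h
    have := congrArg (fun H : PolyFHom (polyComp s c)
        (polyComp (cofreeP p) (polyComp (cofreeP p) s)) =>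
      H.comp (assocInv (cofreeP p) (cofreeP p) s)) h.2.symm
    exact this
  have e : ∀ (n : ℕ) (Ψ : PolyFHom (polyComp s c) (polyComp (cofreeP p) s)),
      IsHandler (M0 p) mc s Ψ →
      Ψ.comp (hcomp ((pi p (n+1)).comp (psnd yPoly (polyComp p (iter p n))))
          (PolyFHom.id s))
        = canH mc s n (Ψ.comp (hcomp (projP p) (PolyFHom.id s)))
            (Ψ.comp (hcomp (pi p n) (PolyFHom.id s))) := by
    intro n Ψ h
    rw [outrec n]
    show (Ψ.comp (hcomp delta0 (PolyFHom.id s))).comp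
      (hcomp (hcomp (projP p) (pi p n)) (PolyFHom.id s)) = _
    rw [ho Ψ h]
    rfl
  apply limit_ind
  · exact (k Ψ1 h1).trans (k Ψ2 h2).symm
  · intro n
    rw [pi_fst]
    exact (k Ψ1 h1).trans (k Ψ2 h2).symm
  · intro n ih
    rw [e n Ψ1 h1, e n Ψ2 h2, hp, ih]

end Unique

end CFH
namespace CFH

variable {p : PolyF}

theorem isComonHom_id {e : PolyF} (m : ComonoidStruct e) :
    IsComonHom m m (PolyFHom.id e) := ⟨rfl, rfl⟩

theorem isComonHom_comp {e1 e2 e3 : PolyF} {m1 : ComonoidStruct e1} {m2 : ComonoidStruct e2}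
    {m3 : ComonoidStruct e3} {g : PolyFHom e1 e2} {h : PolyFHom e2 e3}
    (hg : IsComonHom m1 m2 g) (hh : IsComonHom m2 m3 h) :
    IsComonHom m1 m3 (g.comp h) := by
  constructor
  · show g.comp (h.comp m3.counit) = m1.counit
    rw [hh.1]
    exact hg.1
  · show g.comp (h.comp m3.comul) = _
    rw [hh.2]
    show (g.comp m2.comul).comp (hcomp h h) = _
    rw [hg.2]
    rfl

theorem handler_map {e1 e2 c : PolyF} {m1 : ComonoidStruct e1} {m2 : ComonoidStruct e2}
    {mc : ComonoidStruct c} {s : PolyF} {Ψ : PolyFHom (polyComp s c) (polyComp e1 s)}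
    (h : IsHandler m1 mc s Ψ) {w : PolyFHom e1 e2}
    (hw1 : w.comp m2.counit = m1.counit)
    (hw2 : w.comp m2.comul = m1.comul.comp (hcomp w w)) :
    IsHandler m2 mc s (Ψ.comp (hcomp w (PolyFHom.id s))) := by
  constructor
  · show Ψ.comp ((hcomp (w.comp m2.counit) (PolyFHom.id s)).comp (lunitor s)) = _
    rw [hw1]
    exact h.1
  · rw [show (Ψ.comp (hcomp w (PolyFHom.id s))).comp ((hcomp m2.comul (PolyFHom.id s)).comp
        (assocHom e2 e2 s))
      = ((Ψ.comp ((hcomp m1.comul (PolyFHom.id s)).comp (assocHom e1 e1 s))).comp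
          (hcomp w (hcomp w (PolyFHom.id s)))) from by
        show (Ψ.comp (hcomp (w.comp m2.comul) (PolyFHom.id s))).comp (assocHom e2 e2 s) = _
        rw [hw2]
        rfl]
    rw [← h.2]
    rfl

end CFH

/-- For a polynomial `p` and a comonoid `(c, mc)`, effects handlers whose
source comonoid is the cofree comonoid `c⁀p` (with its couniversal comonoid structure)
are in bijection with elementary `(p,c)`-effects handlers, the bijection being given by
composition with the projection `c⁀p → p`. -/
theorem cofree_handlers_bijection (p : PolyF) (M : ComonoidStruct (cofreeP p))
    (hM : ∀ (c0 : PolyF) (m0 : ComonoidStruct c0) (f : PolyFHom c0 p),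
      ∃! g : PolyFHom c0 (cofreeP p), IsComonHom m0 M g ∧ g.comp (projP p) = f)
    (c : PolyF) (mc : ComonoidStruct c) (s : PolyF) :
    ∃ E : {Φ : PolyFHom (polyComp s c) (polyComp (cofreeP p) s) // IsHandler M mc s Φ}
        ≃ PolyFHom (polyComp s c) (polyComp p s),
      ∀ Φ, E Φ = Φ.val.comp (hcomp (projP p) (PolyFHom.id s)) := by
  classical
  open CFH in
  -- the canonical comparison map `v : (c⁀p, M) → (c⁀p, M₀)`
  let v : PolyFHom (cofreeP p) (cofreeP p) := gmap M (projP p)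
  have hv : IsComonHom M (M0 p) v ∧ v.comp (projP p) = projP p := glift M (projP p)
  -- the comparison map `u : (c⁀p, M₀) → (c⁀p, M)` from the universal property
  obtain ⟨u, ⟨hu, hup⟩, huniq⟩ := hM (cofreeP p) (M0 p) (projP p)
  -- `v ∘ u = id`
  obtain ⟨g0, hg0, hg0uniq⟩ := hM (cofreeP p) M (projP p)
  have hvu : v.comp u = PolyFHom.id (cofreeP p) := by
    have h1 : v.comp u = g0 := hg0uniq _ ⟨isComonHom_comp hv.1 hu, by
      show v.comp (u.comp (projP p)) = projP p
      rw [hup]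
      exact hv.2⟩
    have h2 : PolyFHom.id (cofreeP p) = g0 := hg0uniq _ ⟨isComonHom_id M, rfl⟩
    rw [h1, h2]
  -- `u ∘ v = id`
  have hv1 : v.comp (projZero p) = M.counit := hv.1.1
  have hv2 : v.comp delta0 = M.comul.comp (hcomp v v) := hv.1.2
  have huv : u.comp v = PolyFHom.id (cofreeP p) := by
    apply comonhom_unique (projZero p) delta0
    · show u.comp (v.comp (projZero p)) = projZero p
      rw [hv1]
      exact hu.1
    · rfl
    · show u.comp (v.comp delta0) = _
      rw [hv2]
      show (u.comp M.comul).comp (hcomp v v) = _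
      rw [hu.2]
      rfl
    · rfl
    · show u.comp (v.comp (projP p)) = projP p
      rw [hv.2]
      exact hup
  -- the bijection
  have hbij : Function.Bijective
      (fun Ψ : {Φ : PolyFHom (polyComp s c) (polyComp (cofreeP p) s) // IsHandler M mc s Φ}
        => Ψ.val.comp (hcomp (projP p) (PolyFHom.id s))) := by
    constructor
    · rintro ⟨Ψ1, h1⟩ ⟨Ψ2, h2⟩ h12
      have hps : ∀ Ψ : PolyFHom (polyComp s c) (polyComp (cofreeP p) s),
          (Ψ.comp (hcomp v (PolyFHom.id s))).comp (hcomp (projP p) (PolyFHom.id s))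
            = Ψ.comp (hcomp (projP p) (PolyFHom.id s)) := by
        intro Ψ
        show Ψ.comp (hcomp (v.comp (projP p)) (PolyFHom.id s)) = _
        rw [hv.2]
      have key : Ψ1.comp (hcomp v (PolyFHom.id s)) = Ψ2.comp (hcomp v (PolyFHom.id s)) := by
        apply handler_unique mc s (handler_map h1 hv.1.1 hv.1.2) (handler_map h2 hv.1.1 hv.1.2)
        rw [hps, hps]
        exact h12
      have recover : ∀ Ψ : PolyFHom (polyComp s c) (polyComp (cofreeP p) s),
          (Ψ.comp (hcomp v (PolyFHom.id s))).comp (hcomp u (PolyFHom.id s)) = Ψ := by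
        intro Ψ
        show Ψ.comp (hcomp (v.comp u) (PolyFHom.id s)) = Ψ
        rw [hvu]
        rfl
      apply Subtype.ext
      show Ψ1 = Ψ2
      rw [← recover Ψ1, ← recover Ψ2, key]
    · intro φ
      refine ⟨⟨(Phi c mc s φ).comp (hcomp u (PolyFHom.id s)),
        handler_map (Phi_handler c mc s φ) hu.1 hu.2⟩, ?_⟩
      show (Phi c mc s φ).comp (hcomp (u.comp (projP p)) (PolyFHom.id s)) = φ
      rw [hup]
      exact Phi_proj c mc s φ
  exact ⟨Equiv.ofBijective _ hbij, fun Φ => rfl⟩
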